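/- For the dihedral group I₂(m) with m odd, the set of conjugacy classes of special involutions has exactly 2 elements (the identity and the class of reflections), while for m even it has exactly 4 elements (the identity, the two conjugacy classes of reflections, and −Id). -/

import Mathlib

noncomputable section

open Complex RealInnerProductSpace

/-- The `(−1)`-eigenspace of an isometry `σ` of the Euclidean plane. -/
def minusEigenspace (σ : EuclideanSpace ℝ (Fin 2) ≃ₗᵢ[ℝ] EuclideanSpace ℝ (Fin 2)) :
    Submodule ℝ (EuclideanSpace ℝ (Fin 2)) :=
  Module.End.eigenspace (σ.toLinearEquiv : EuclideanSpace ℝ (Fin 2) →ₗ[ℝ] _) (-1)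

/-- The `(+1)`-eigenspace of an isometry `σ` of the Euclidean plane. -/
def plusEigenspace (σ : EuclideanSpace ℝ (Fin 2) ≃ₗᵢ[ℝ] EuclideanSpace ℝ (Fin 2)) :
    Submodule ℝ (EuclideanSpace ℝ (Fin 2)) :=
  Module.End.eigenspace (σ.toLinearEquiv : EuclideanSpace ℝ (Fin 2) →ₗ[ℝ] _) 1

/-- The `j`-th root of the dihedral root system `I₂(m)`:
the unit vector at angle `jπ/m`. -/
def dihedralRoot (m j : ℕ) : EuclideanSpace ℝ (Fin 2) := WithLp.toLp 2 fun (i : Fin 2) =>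
  if i = 0 then Real.cos (j * Real.pi / m) else Real.sin (j * Real.pi / m)

/-- `σ` is a *special involution* with respect to the root system `R`:
`σ² = 1` and, for every root `α ∈ R`, the orthogonal projection of `α` onto the
`(−1)`-eigenspace `V₁` of `σ` is proportional to a root lying in `V₁`, or the
projection onto the `(+1)`-eigenspace `V₂` is proportional to a root in `V₂`. -/
def IsSpecialInvolution (R : Finset (EuclideanSpace ℝ (Fin 2)))
    (σ : EuclideanSpace ℝ (Fin 2) ≃ₗᵢ[ℝ] EuclideanSpace ℝ (Fin 2)) : Prop :=
  σ * σ = 1 ∧ ∀ α ∈ R,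
    (∃ c : ℝ, ∃ β ∈ R, β ∈ minusEigenspace σ ∧
      (Submodule.orthogonalProjectionOnto (minusEigenspace σ) α : EuclideanSpace ℝ (Fin 2)) = c • β) ∨
    (∃ c : ℝ, ∃ β ∈ R, β ∈ plusEigenspace σ ∧
      (Submodule.orthogonalProjectionOnto (plusEigenspace σ) α : EuclideanSpace ℝ (Fin 2)) = c • β)

abbrev E2 := EuclideanSpace ℝ (Fin 2)

/-- Standard isometry from ℂ to the Euclidean plane. -/
def cIso : ℂ ≃ₗᵢ[ℝ] E2 := Complex.orthonormalBasisOneI.repr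

/-- Conjugation of isometry groups by `cIso`. -/
def Phi : (ℂ ≃ₗᵢ[ℝ] ℂ) →* (E2 ≃ₗᵢ[ℝ] E2) where
  toFun f := (cIso.symm.trans f).trans cIso
  map_one' := by ext x; simp
  map_mul' f g := by ext x; simp

lemma Phi_apply (f : ℂ ≃ₗᵢ[ℝ] ℂ) (x : E2) : Phi f x = cIso (f (cIso.symm x)) := rfl

lemma Phi_injective : Function.Injective Phi := by
  intro f g h
  ext z
  have := congrArg (fun u => cIso.symm (u (cIso z))) h
  simpa [Phi_apply] using this

def rotA (θ : ℝ) : ℂ ≃ₗᵢ[ℝ] ℂ := rotation (Circle.exp θ)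

def refA (θ : ℝ) : ℂ ≃ₗᵢ[ℝ] ℂ := rotation (Circle.exp θ) * conjLIE

lemma refA_def (θ : ℝ) : refA θ = rotA θ * conjLIE := rfl

lemma rotA_apply (θ : ℝ) (z : ℂ) : rotA θ z = Complex.exp (θ * I) * z := by
  simp [rotA, rotation_apply, Circle.coe_exp]

lemma mul_apply' (f g : ℂ ≃ₗᵢ[ℝ] ℂ) (z : ℂ) : (f * g) z = f (g z) := rfl

lemma refA_apply (θ : ℝ) (z : ℂ) : refA θ z = Complex.exp (θ * I) * (starRingEnd ℂ) z := by
  simp [refA, mul_apply', conjLIE_apply, rotation_apply, Circle.coe_exp]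

lemma rotA_mul_rotA (θ φ : ℝ) : rotA θ * rotA φ = rotA (θ + φ) := by
  simp [rotA, ← map_mul, ← Circle.exp_add]

lemma rotA_zero : rotA 0 = 1 := by simp [rotA]

lemma rotA_mul_refA (θ φ : ℝ) : rotA θ * refA φ = refA (θ + φ) := by
  rw [refA_def, ← mul_assoc, rotA_mul_rotA, refA_def]

lemma conjLIE_mul_rotA (θ : ℝ) : conjLIE * rotA θ = rotA (-θ) * conjLIE := by
  ext z
  simp only [mul_apply', conjLIE_apply, rotA_apply, map_mul]
  rw [← Complex.exp_conj]
  congr 1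
  simp

lemma refA_mul_rotA (θ φ : ℝ) : refA θ * rotA φ = refA (θ - φ) := by
  rw [refA_def, mul_assoc, conjLIE_mul_rotA, ← mul_assoc, rotA_mul_rotA, ← refA_def,
    sub_eq_add_neg]

lemma conjLIE_mul_conjLIE : conjLIE * conjLIE = 1 := by
  ext z; simp [mul_apply', conjLIE_apply]

lemma refA_mul_refA (θ φ : ℝ) : refA θ * refA φ = rotA (θ - φ) := by
  rw [refA_def, refA_def, mul_assoc, ← mul_assoc conjLIE, conjLIE_mul_rotA, mul_assoc,
    conjLIE_mul_conjLIE, mul_one, rotA_mul_rotA, sub_eq_add_neg]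

lemma rotA_eq_rotA {θ φ : ℝ} : rotA θ = rotA φ ↔ ∃ n : ℤ, θ = φ + n * (2 * Real.pi) := by
  rw [rotA, rotA, rotation_injective.eq_iff, Circle.exp_eq_exp]

lemma refA_eq_refA {θ φ : ℝ} : refA θ = refA φ ↔ ∃ n : ℤ, θ = φ + n * (2 * Real.pi) := by
  rw [refA_def, refA_def, mul_left_inj, rotA_eq_rotA]

lemma rotA_ne_refA (θ φ : ℝ) : rotA θ ≠ refA φ := by
  intro h
  apply rotation_ne_conjLIE ((Circle.exp φ)⁻¹ * Circle.exp θ)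
  rw [map_mul]
  rw [rotA, refA] at h
  rw [h, ← mul_assoc, ← map_mul, inv_mul_cancel, map_one, one_mul]

/-! ### The dihedral elements -/

def RkE (m : ℕ) (k : ℤ) : E2 ≃ₗᵢ[ℝ] E2 := Phi (rotA (2 * Real.pi * k / m))

def SjE (m : ℕ) (j : ℤ) : E2 ≃ₗᵢ[ℝ] E2 := Phi (refA (2 * Real.pi * j / m + Real.pi))

lemma angle_cong (m : ℕ) (hm : m ≠ 0) {k k' : ℤ} :
    (∃ n : ℤ, 2*Real.pi*k/m = 2*Real.pi*k'/m + n*(2*Real.pi)) ↔ (m:ℤ) ∣ (k - k') := by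
  have hm' : (m:ℝ) ≠ 0 := Nat.cast_ne_zero.2 hm
  constructor
  · rintro ⟨n, h⟩
    refine ⟨n, ?_⟩
    field_simp at h
    have h2 : 2*Real.pi*((k:ℝ) - k') = 2*Real.pi*(m*n) := by rw [h]; ring
    have h3 := mul_left_cancel₀ (by positivity : (2*Real.pi:ℝ) ≠ 0) h2
    exact_mod_cast h3
  · rintro ⟨n, hn⟩
    refine ⟨n, ?_⟩
    have h' : (k:ℝ) = k' + m*n := by
      have : (k:ℝ) - k' = m*n := by exact_mod_cast hn
      linarith
    rw [h']; field_simp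

lemma RkE_eq_RkE {m : ℕ} (hm : m ≠ 0) {k k' : ℤ} :
    RkE m k = RkE m k' ↔ (m:ℤ) ∣ (k - k') := by
  rw [RkE, RkE, Phi_injective.eq_iff, rotA_eq_rotA, angle_cong m hm]

lemma SjE_eq_SjE {m : ℕ} (hm : m ≠ 0) {j j' : ℤ} :
    SjE m j = SjE m j' ↔ (m:ℤ) ∣ (j - j') := by
  rw [SjE, SjE, Phi_injective.eq_iff, refA_eq_refA]
  constructor
  · rintro ⟨n, h⟩
    exact (angle_cong m hm).1 ⟨n, by linarith⟩
  · intro h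
    obtain ⟨n, h⟩ := (angle_cong m hm).2 h
    exact ⟨n, by linarith⟩

lemma RkE_ne_SjE (m : ℕ) (k j : ℤ) : RkE m k ≠ SjE m j := by
  intro h
  exact rotA_ne_refA _ _ (Phi_injective h)

lemma RkE_zero (m : ℕ) : RkE m 0 = 1 := by
  have : 2*Real.pi*((0:ℤ):ℝ)/m = 0 := by simp
  rw [RkE, this, rotA_zero, map_one]

lemma RkE_mul_RkE (m : ℕ) (k k' : ℤ) : RkE m k * RkE m k' = RkE m (k + k') := by
  rw [RkE, RkE, RkE, ← map_mul, rotA_mul_rotA]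
  congr 1
  push_cast
  ring

lemma RkE_mul_SjE (m : ℕ) (k j : ℤ) : RkE m k * SjE m j = SjE m (k + j) := by
  rw [RkE, SjE, SjE, ← map_mul, rotA_mul_refA]
  congr 1
  push_cast
  ring

lemma SjE_mul_RkE (m : ℕ) (j k : ℤ) : SjE m j * RkE m k = SjE m (j - k) := by
  rw [RkE, SjE, SjE, ← map_mul, refA_mul_rotA]
  congr 1
  push_cast
  ring

lemma SjE_mul_SjE (m : ℕ) (j j' : ℤ) : SjE m j * SjE m j' = RkE m (j - j') := by
  rw [RkE, SjE, SjE, ← map_mul, refA_mul_refA]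
  congr 1
  push_cast
  ring

lemma SjE_inv (m : ℕ) (j : ℤ) : (SjE m j)⁻¹ = SjE m j := by
  refine inv_eq_of_mul_eq_one_right ?_
  rw [SjE_mul_SjE, sub_self, RkE_zero]

lemma RkE_inv (m : ℕ) (k : ℤ) : (RkE m k)⁻¹ = RkE m (-k) := by
  refine inv_eq_of_mul_eq_one_right ?_
  rw [RkE_mul_RkE, add_neg_cancel, RkE_zero]

/-! ### Geometry: reflections, roots, eigenspaces -/

lemma cIso_apply_coords (z : ℂ) : cIso z = ![z.re, z.im] :=
  Complex.orthonormalBasisOneI_repr_apply z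

lemma dihedralRoot_eq (m j : ℕ) :
    dihedralRoot m j = cIso (Complex.exp (((j : ℝ) * Real.pi / m : ℝ) * I)) := by
  ext i
  rw [cIso_apply_coords]
  fin_cases i <;>
    simp only [dihedralRoot, Complex.exp_ofReal_mul_I_re, Complex.exp_ofReal_mul_I_im,
      Matrix.cons_val_zero, Matrix.cons_val_one, Matrix.head_cons] <;> norm_num

lemma norm_exp_unit (t : ℝ) : ‖Complex.exp ((t:ℝ) * I)‖ = 1 := by
  rw [Complex.norm_exp_ofReal_mul_I]

lemma conj_mul_self_of_norm_one {w : ℂ} (hw : ‖w‖ = 1) : (starRingEnd ℂ) w * w = 1 := by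
  rw [mul_comm, Complex.mul_conj]
  rw [Complex.normSq_eq_norm_sq, hw]
  norm_num

lemma reflection_cIso (w : ℂ) (hw : ‖w‖ = 1) (x : E2) :
    Submodule.reflection (ℝ ∙ (cIso w))ᗮ x = cIso (-(w^2) * (starRingEnd ℂ) (cIso.symm x)) := by
  set z := cIso.symm x with hz
  have hx : x = cIso z := (cIso.apply_symm_apply x).symm
  rw [Submodule.reflection_orthogonal_apply, Submodule.reflection_singleton_apply]
  have h1 : (inner ℝ (cIso w) x : ℝ) = ((starRingEnd ℂ) w * z).re := by
    rw [hx, cIso.inner_map_map, Complex.inner, mul_comm]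
  have h2 : ‖cIso w‖ = 1 := by rw [cIso.norm_map, hw]
  rw [h1, h2, hx]
  apply cIso.symm.injective
  simp only [map_neg, map_sub, map_smul, map_nsmul, LinearIsometryEquiv.symm_apply_apply]
  have hcw : (starRingEnd ℂ) w * w = 1 := conj_mul_self_of_norm_one hw
  have h3 : ((((starRingEnd ℂ) w * z).re : ℝ) : ℂ)
      = ((starRingEnd ℂ) w * z + (starRingEnd ℂ) ((starRingEnd ℂ) w * z)) / 2 := by
    rw [Complex.add_conj]
    push_cast
    ring
  simp only [RCLike.ofReal_one, one_pow, div_one, neg_sub]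
  rw [two_smul, Complex.real_smul, h3]
  simp only [map_mul, Complex.conj_conj]
  linear_combination (-z) * hcw

lemma reflection_eq_SjE (m : ℕ) (hm : m ≠ 0) (j : ℕ) :
    Submodule.reflection (ℝ ∙ dihedralRoot m j)ᗮ = SjE m (j : ℤ) := by
  ext x : 1
  rw [dihedralRoot_eq, reflection_cIso _ (norm_exp_unit _), SjE, Phi_apply, refA_apply]
  congr 2
  have ha : (2*Real.pi*((j:ℤ):ℝ)/m + Real.pi : ℝ)
      = ((j:ℝ) * Real.pi / m) + ((j:ℝ) * Real.pi / m) + Real.pi := by push_cast; ring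
  rw [ha]
  push_cast
  rw [add_mul, add_mul, Complex.exp_add, Complex.exp_add, Complex.exp_pi_mul_I]
  ring

lemma mem_minusEigenspace {σ : E2 ≃ₗᵢ[ℝ] E2} {x : E2} :
    x ∈ minusEigenspace σ ↔ σ x = -x := by
  rw [minusEigenspace, Module.End.mem_eigenspace_iff]
  simp

lemma mem_plusEigenspace {σ : E2 ≃ₗᵢ[ℝ] E2} {x : E2} :
    x ∈ plusEigenspace σ ↔ σ x = x := by
  rw [plusEigenspace, Module.End.mem_eigenspace_iff]
  simp

lemma plusEigenspace_one : plusEigenspace (1 : E2 ≃ₗᵢ[ℝ] E2) = ⊤ := by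
  rw [eq_top_iff]
  intro x _
  rw [mem_plusEigenspace]
  rfl

lemma minusEigenspace_of_neg {σ : E2 ≃ₗᵢ[ℝ] E2} (h : ∀ x, σ x = -x) :
    minusEigenspace σ = ⊤ := by
  rw [eq_top_iff]
  intro x _
  rw [mem_minusEigenspace]
  exact h x

lemma refA_eq_neg_iff {θ : ℝ} {w z : ℂ} (hw2 : w^2 = -Complex.exp ((θ:ℝ)*I)) :
    refA θ z = -z ↔ ∃ c : ℝ, c • w = z := by
  have hw : ‖w‖ = 1 := by
    have h2 : ‖w‖^2 = 1 := by
      have h0 := congrArg norm hw2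
      rwa [norm_pow, norm_neg, norm_exp_unit] at h0
    have h3 : (‖w‖ - 1) * (‖w‖ + 1) = 0 := by nlinarith
    rcases mul_eq_zero.1 h3 with h | h
    · linarith
    · linarith [norm_nonneg w]
  have hcw : (starRingEnd ℂ) w * w = 1 := conj_mul_self_of_norm_one hw
  rw [refA_apply]
  constructor
  · intro h
    have hz : z = w^2 * (starRingEnd ℂ) z := by
      linear_combination h - (starRingEnd ℂ) z * hw2
    refine ⟨((starRingEnd ℂ) w * z).re, ?_⟩
    have hconj : (starRingEnd ℂ) ((starRingEnd ℂ) w * z) = (starRingEnd ℂ) w * z := by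
      have hz' := congrArg (starRingEnd ℂ) hz
      simp only [map_mul, map_pow, Complex.conj_conj] at hz'
      simp only [map_mul, Complex.conj_conj]
      rw [hz']
      linear_combination ((starRingEnd ℂ) w * z) * hcw
    have hre : ((((starRingEnd ℂ) w * z).re : ℝ) : ℂ) = (starRingEnd ℂ) w * z :=
      Complex.conj_eq_iff_re.1 hconj
    rw [Complex.real_smul, hre]
    linear_combination z * hcw
  · rintro ⟨c, rfl⟩
    rw [Complex.real_smul]
    simp only [map_mul, Complex.conj_ofReal]
    linear_combination ((c:ℂ) * (starRingEnd ℂ) w) * hw2 + (-(c:ℂ) * w) * hcw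

lemma minusEigenspace_SjE (m : ℕ) (hm : m ≠ 0) (j : ℕ) :
    minusEigenspace (SjE m (j : ℤ)) = ℝ ∙ dihedralRoot m (j + m) := by
  have hm' : (m:ℝ) ≠ 0 := Nat.cast_ne_zero.2 hm
  have hw2 : (Complex.exp ((((j + m : ℕ) : ℝ) * Real.pi / m : ℝ) * I))^2
      = -Complex.exp (((2*Real.pi*((j:ℤ):ℝ)/m + Real.pi : ℝ)) * I) := by
    have h1 : -Complex.exp (((2*Real.pi*((j:ℤ):ℝ)/m + Real.pi : ℝ)) * I)
        = Complex.exp (((2*Real.pi*((j:ℤ):ℝ)/m + Real.pi : ℝ)) * I)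
          * Complex.exp ((Real.pi : ℝ) * I) := by
      rw [Complex.exp_pi_mul_I]; ring
    rw [h1, ← Complex.exp_add, sq, ← Complex.exp_add]
    congr 1
    have : (((j + m : ℕ) : ℝ) * Real.pi / m : ℝ) + (((j + m : ℕ) : ℝ) * Real.pi / m : ℝ)
        = (2*Real.pi*((j:ℤ):ℝ)/m + Real.pi : ℝ) + Real.pi := by
      push_cast
      field_simp
      ring
    rw [← add_mul, ← add_mul, ← Complex.ofReal_add, ← Complex.ofReal_add, this]
  ext x
  rw [mem_minusEigenspace, dihedralRoot_eq, Submodule.mem_span_singleton]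
  rw [SjE, Phi_apply]
  have hx : -x = cIso (-(cIso.symm x)) := by simp
  rw [hx, cIso.injective.eq_iff, refA_eq_neg_iff hw2]
  constructor
  · rintro ⟨c, hc⟩
    refine ⟨c, ?_⟩
    rw [← map_smul, hc]
    simp
  · rintro ⟨c, hc⟩
    refine ⟨c, cIso.injective ?_⟩
    simp only [map_smul, hc]
    simp

lemma RkE_half_neg {m n : ℕ} (hn : n ≠ 0) (hm : m = 2*n) (x : E2) :
    RkE m (n : ℤ) x = -x := by
  have hθ : (2*Real.pi*((n:ℤ):ℝ)/m : ℝ) = Real.pi := by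
    subst hm
    have : ((2*n : ℕ):ℝ) = 2*(n:ℝ) := by push_cast; ring
    rw [this]
    have hn' : (n:ℝ) ≠ 0 := Nat.cast_ne_zero.2 hn
    push_cast
    field_simp
  rw [RkE, hθ, Phi_apply, rotA_apply, Complex.exp_pi_mul_I]
  have : (-1 : ℂ) * (cIso.symm x) = -(cIso.symm x) := by ring
  rw [this]
  simp

lemma special_of_plus_top {R : Finset E2} {σ : E2 ≃ₗᵢ[ℝ] E2} (hs : σ * σ = 1)
    (h : plusEigenspace σ = ⊤) : IsSpecialInvolution R σ := by
  refine ⟨hs, fun α hα => Or.inr ⟨1, α, hα, by rw [h]; trivial, ?_⟩⟩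
  rw [one_smul]
  exact congrArg Subtype.val (Submodule.orthogonalProjectionOnto_mem_subspace_eq_self
    (⟨α, by rw [h]; trivial⟩ : plusEigenspace σ))

lemma special_of_minus_top {R : Finset E2} {σ : E2 ≃ₗᵢ[ℝ] E2} (hs : σ * σ = 1)
    (h : minusEigenspace σ = ⊤) : IsSpecialInvolution R σ := by
  refine ⟨hs, fun α hα => Or.inl ⟨1, α, hα, by rw [h]; trivial, ?_⟩⟩
  rw [one_smul]
  exact congrArg Subtype.val (Submodule.orthogonalProjectionOnto_mem_subspace_eq_self
    (⟨α, by rw [h]; trivial⟩ : minusEigenspace σ))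

lemma special_of_line {R : Finset E2} {σ : E2 ≃ₗᵢ[ℝ] E2} (hs : σ * σ = 1) {β : E2}
    (hβR : β ∈ R) (h : minusEigenspace σ = ℝ ∙ β) : IsSpecialInvolution R σ := by
  refine ⟨hs, fun α hα => Or.inl ?_⟩
  set v := ((Submodule.orthogonalProjectionOnto (minusEigenspace σ) α : E2)) with hv
  have hproj : v ∈ minusEigenspace σ := SetLike.coe_mem _
  rw [h] at hproj
  obtain ⟨c, hc⟩ := Submodule.mem_span_singleton.1 hproj
  exact ⟨c, β, hβR, by rw [h]; exact Submodule.mem_span_singleton_self β, hc.symm⟩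

/-! ### Group structure -/

lemma SjE_mem {m : ℕ} (hm : 1 ≤ m) {R : Finset E2}
    (hR : (R : Set E2) = {v | ∃ j < 2 * m, v = dihedralRoot m j})
    {G : Subgroup (E2 ≃ₗᵢ[ℝ] E2)}
    (hG : G = Subgroup.closure {g | ∃ α ∈ R, g = Submodule.reflection (ℝ ∙ α)ᗮ})
    (j : ℤ) : SjE m j ∈ G := by
  have hm0 : m ≠ 0 := by omega
  have hmz : (0:ℤ) < m := by exact_mod_cast Nat.pos_of_ne_zero hm0
  set j0 : ℕ := (j % m).toNat with hj0def
  have hj0 : (j0 : ℤ) = j % m := Int.toNat_of_nonneg (Int.emod_nonneg j (by omega))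
  have heq : SjE m j = SjE m j0 := by
    rw [SjE_eq_SjE hm0]
    exact ⟨j / m, by rw [hj0, Int.emod_def]; ring⟩
  have hjlt : j0 < 2 * m := by
    have h1 : (j0:ℤ) < m := by rw [hj0]; exact Int.emod_lt_of_pos _ hmz
    have h2 : j0 < m := by exact_mod_cast h1
    omega
  rw [heq, ← reflection_eq_SjE m hm0 j0, hG]
  apply Subgroup.subset_closure
  refine ⟨dihedralRoot m j0, ?_, rfl⟩
  rw [← Finset.mem_coe, hR]
  exact ⟨j0, hjlt, rfl⟩

lemma RkE_mem {m : ℕ} (hm : 1 ≤ m) {R : Finset E2}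
    (hR : (R : Set E2) = {v | ∃ j < 2 * m, v = dihedralRoot m j})
    {G : Subgroup (E2 ≃ₗᵢ[ℝ] E2)}
    (hG : G = Subgroup.closure {g | ∃ α ∈ R, g = Submodule.reflection (ℝ ∙ α)ᗮ})
    (k : ℤ) : RkE m k ∈ G := by
  have h : RkE m k = SjE m k * SjE m 0 := by rw [SjE_mul_SjE, sub_zero]
  rw [h]
  exact mul_mem (SjE_mem hm hR hG k) (SjE_mem hm hR hG 0)

lemma mem_G_classify {m : ℕ} (hm : 1 ≤ m) {R : Finset E2}
    (hR : (R : Set E2) = {v | ∃ j < 2 * m, v = dihedralRoot m j})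
    {G : Subgroup (E2 ≃ₗᵢ[ℝ] E2)}
    (hG : G = Subgroup.closure {g | ∃ α ∈ R, g = Submodule.reflection (ℝ ∙ α)ᗮ})
    {g : E2 ≃ₗᵢ[ℝ] E2} (hg : g ∈ G) :
    (∃ k : ℤ, g = RkE m k) ∨ (∃ j : ℤ, g = SjE m j) := by
  have hm0 : m ≠ 0 := by omega
  rw [hG] at hg
  induction hg using Subgroup.closure_induction with
  | mem x hx =>
    obtain ⟨α, hα, rfl⟩ := hx
    rw [← Finset.mem_coe, hR] at hα
    obtain ⟨j, _, rfl⟩ := hα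
    exact Or.inr ⟨j, reflection_eq_SjE m hm0 j⟩
  | one => exact Or.inl ⟨0, (RkE_zero m).symm⟩
  | mul x y _ _ hx hy =>
    rcases hx with ⟨k, rfl⟩ | ⟨j, rfl⟩ <;> rcases hy with ⟨k', rfl⟩ | ⟨j', rfl⟩
    · exact Or.inl ⟨k + k', RkE_mul_RkE m k k'⟩
    · exact Or.inr ⟨k + j', RkE_mul_SjE m k j'⟩
    · exact Or.inr ⟨j - k', SjE_mul_RkE m j k'⟩
    · exact Or.inl ⟨j - j', SjE_mul_SjE m j j'⟩
  | inv x _ hx =>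
    rcases hx with ⟨k, rfl⟩ | ⟨j, rfl⟩
    · exact Or.inl ⟨-k, RkE_inv m k⟩
    · exact Or.inr ⟨j, SjE_inv m j⟩

lemma conj_SjE {m : ℕ} {h : E2 ≃ₗᵢ[ℝ] E2}
    (hh : (∃ k : ℤ, h = RkE m k) ∨ (∃ i : ℤ, h = SjE m i)) (j : ℤ) :
    ∃ i : ℤ, h * SjE m j * h⁻¹ = SjE m (j + 2*i) ∨ h * SjE m j * h⁻¹ = SjE m (2*i - j) := by
  rcases hh with ⟨k, rfl⟩ | ⟨i, rfl⟩
  · refine ⟨k, Or.inl ?_⟩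
    rw [RkE_inv, RkE_mul_SjE, SjE_mul_RkE]
    congr 1
    ring
  · refine ⟨i, Or.inr ?_⟩
    rw [SjE_inv, SjE_mul_SjE, RkE_mul_SjE]
    congr 1
    ring

lemma conj_RkE {m : ℕ} {h : E2 ≃ₗᵢ[ℝ] E2}
    (hh : (∃ k : ℤ, h = RkE m k) ∨ (∃ i : ℤ, h = SjE m i)) (k : ℤ) :
    h * RkE m k * h⁻¹ = RkE m k ∨ h * RkE m k * h⁻¹ = RkE m (-k) := by
  rcases hh with ⟨l, rfl⟩ | ⟨i, rfl⟩
  · refine Or.inl ?_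
    rw [RkE_inv, RkE_mul_RkE, RkE_mul_RkE]
    congr 1
    ring
  · refine Or.inr ?_
    rw [SjE_inv, SjE_mul_RkE, SjE_mul_SjE]
    congr 1
    ring

lemma isConj_coe {G : Subgroup (E2 ≃ₗᵢ[ℝ] E2)} (a b : G) :
    IsConj a b ↔ ∃ h ∈ G, h * (a : E2 ≃ₗᵢ[ℝ] E2) * h⁻¹ = b := by
  rw [isConj_iff]
  constructor
  · rintro ⟨c, hc⟩
    refine ⟨c, c.2, ?_⟩
    have := congrArg (Subtype.val) hc
    simpa using this
  · rintro ⟨h, hhG, hh⟩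
    exact ⟨⟨h, hhG⟩, Subtype.ext (by simpa using hh)⟩

lemma conj_by_RkE (m : ℕ) (l j : ℤ) :
    RkE m l * SjE m j * (RkE m l)⁻¹ = SjE m (j + 2*l) := by
  rw [RkE_inv, RkE_mul_SjE, SjE_mul_RkE]
  congr 1
  ring

lemma odd_dvd_of_dvd_two_mul {m : ℕ} (hodd : Odd m) {k : ℤ} (h : (m:ℤ) ∣ k + k) :
    (m:ℤ) ∣ k := by
  obtain ⟨q, hq⟩ := h
  rcases Int.even_or_odd q with ⟨r, hr⟩ | ⟨r, hr⟩
  · refine ⟨r, ?_⟩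
    have h2 : (2:ℤ) * k = 2 * ((m:ℤ) * r) := by
      have : k + k = (m:ℤ) * (r + r) := by rw [hq, hr]
      linarith
    exact mul_left_cancel₀ two_ne_zero h2
  · exfalso
    obtain ⟨t, ht⟩ := hodd
    have heven : Even ((m:ℤ) * q) := ⟨k, by rw [← hq]⟩
    have hodd' : Odd ((m:ℤ) * q) :=
      Odd.mul ⟨(t:ℤ), by push_cast [ht]; ring⟩ ⟨r, hr⟩
    exact (Int.not_odd_iff_even.2 heven) hodd'

/-- for the dihedral group `I₂(m)` (generated by the reflections of
its root system of `2m` roots in the plane), the set of conjugacy classes of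
special involutions has exactly `2` elements when `m` is odd, and exactly `4`
elements when `m` is even. -/
theorem stmt14 (m : ℕ) (hm : 1 ≤ m)
    (R : Finset (EuclideanSpace ℝ (Fin 2)))
    (hR : (R : Set (EuclideanSpace ℝ (Fin 2)))
      = {v | ∃ j < 2 * m, v = dihedralRoot m j})
    (G : Subgroup (EuclideanSpace ℝ (Fin 2) ≃ₗᵢ[ℝ] EuclideanSpace ℝ (Fin 2)))
    (hG : G = Subgroup.closure {g | ∃ α ∈ R, g = Submodule.reflection (ℝ ∙ α)ᗮ})
    (S : Set (ConjClasses G))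
    (hS : S = {c | ∃ g : G, ConjClasses.mk g = c ∧ IsSpecialInvolution R (g : _)}) :
    (Odd m → Nat.card S = 2) ∧ (Even m → Nat.card S = 4) := by
  have hm0 : m ≠ 0 := by omega
  -- the identity element is special
  have hone : IsSpecialInvolution R (1 : E2 ≃ₗᵢ[ℝ] E2) :=
    special_of_plus_top (one_mul 1) plusEigenspace_one
  -- reflections are involutions
  have hSinv : ∀ j : ℤ, SjE m j * SjE m j = 1 := fun j => by
    rw [SjE_mul_SjE, sub_self, RkE_zero]
  -- reflections with small index are special
  have hSspec : ∀ j : ℕ, j < m → IsSpecialInvolution R (SjE m (j:ℤ)) := by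
    intro j hj
    refine special_of_line (hSinv j) ?_ (minusEigenspace_SjE m hm0 j)
    rw [← Finset.mem_coe, hR]
    exact ⟨j + m, by omega, rfl⟩
  constructor
  · -- odd case
    intro hodd
    set a : G := 1 with ha
    set b : G := ⟨SjE m 0, SjE_mem hm hR hG 0⟩ with hb
    have hane : ConjClasses.mk a ≠ ConjClasses.mk b := by
      intro hcontra
      rw [ConjClasses.mk_eq_mk_iff_isConj, isConj_coe] at hcontra
      obtain ⟨h, _, hh⟩ := hcontra
      apply RkE_ne_SjE m 0 0
      rw [RkE_zero]
      calc (1 : E2 ≃ₗᵢ[ℝ] E2) = h * ↑a * h⁻¹ := by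
            simp [ha]
        _ = SjE m 0 := hh
    have hSeq : S = {ConjClasses.mk a, ConjClasses.mk b} := by
      rw [hS]
      ext c
      simp only [Set.mem_setOf_eq, Set.mem_insert_iff, Set.mem_singleton_iff]
      constructor
      · rintro ⟨g, rfl, hgs⟩
        have hinv : (g : E2 ≃ₗᵢ[ℝ] E2) * (g : E2 ≃ₗᵢ[ℝ] E2) = 1 := hgs.1
        rcases mem_G_classify hm hR hG g.2 with ⟨k, hk⟩ | ⟨j, hj⟩
        · left
          have h2k : RkE m (k + k) = RkE m 0 := by
            rw [← RkE_mul_RkE, ← hk, hinv, RkE_zero]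
          have hdvd : (m:ℤ) ∣ (k + k) := by
            have := (RkE_eq_RkE hm0).1 h2k
            simpa using this
          have hdk : (m:ℤ) ∣ k := odd_dvd_of_dvd_two_mul hodd hdvd
          have : (g : E2 ≃ₗᵢ[ℝ] E2) = 1 := by
            rw [hk, ← RkE_zero m]
            exact (RkE_eq_RkE hm0).2 (by simpa using hdk)
          have hg1 : g = a := Subtype.ext (by simpa [ha] using this)
          rw [hg1]
        · right
          obtain ⟨t, ht⟩ := hodd
          rw [ConjClasses.mk_eq_mk_iff_isConj, isConj_coe]
          refine ⟨RkE m (-((t:ℤ)+1)*j), RkE_mem hm hR hG _, ?_⟩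
          rw [hj, conj_by_RkE]
          show SjE m _ = (b : E2 ≃ₗᵢ[ℝ] E2)
          rw [hb]
          refine (SjE_eq_SjE hm0).2 ⟨-j, ?_⟩
          push_cast [ht]
          ring
      · rintro (rfl | rfl)
        · exact ⟨a, rfl, by simpa [ha] using hone⟩
        · exact ⟨b, rfl, by simpa [hb] using hSspec 0 (by omega)⟩
    rw [hSeq, Nat.card_coe_set_eq, Set.ncard_pair hane]
  · -- even case
    intro heven
    obtain ⟨n, hn⟩ := heven
    have hm2 : m = 2 * n := by omega
    have hn1 : 1 ≤ n := by omega
    set a : G := 1 with ha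
    set v : G := ⟨RkE m (n:ℤ), RkE_mem hm hR hG _⟩ with hv
    set b0 : G := ⟨SjE m 0, SjE_mem hm hR hG 0⟩ with hb0
    set b1 : G := ⟨SjE m 1, SjE_mem hm hR hG 1⟩ with hb1
    have hvinv : RkE m (n:ℤ) * RkE m (n:ℤ) = 1 := by
      rw [RkE_mul_RkE, ← RkE_zero m]
      exact (RkE_eq_RkE hm0).2 ⟨1, by push_cast [hm2]; ring⟩
    have hvspec : IsSpecialInvolution R (RkE m (n:ℤ)) :=
      special_of_minus_top hvinv
        (minusEigenspace_of_neg (RkE_half_neg (by omega) hm2))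
    have hdvd2 : (2:ℤ) ∣ (m:ℤ) := ⟨n, by push_cast [hm2]; ring⟩
    -- distinctness
    have h_a_v : ConjClasses.mk a ≠ ConjClasses.mk v := by
      intro hcontra
      rw [ConjClasses.mk_eq_mk_iff_isConj, isConj_coe] at hcontra
      obtain ⟨h, _, hh⟩ := hcontra
      have h1 : RkE m 0 = RkE m (n:ℤ) := by
        rw [RkE_zero]
        calc (1 : E2 ≃ₗᵢ[ℝ] E2) = h * ↑a * h⁻¹ := by simp [ha]
          _ = _ := hh
      have h2 := (RkE_eq_RkE hm0).1 h1
      rw [zero_sub, dvd_neg] at h2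
      have h3 : (m:ℤ) ≤ (n:ℤ) := Int.le_of_dvd (by exact_mod_cast hn1) h2
      have h4 : m ≤ n := by exact_mod_cast h3
      omega
    have h_a_b : ∀ j : ℤ, ∀ bb : G, (bb : E2 ≃ₗᵢ[ℝ] E2) = SjE m j →
        ConjClasses.mk a ≠ ConjClasses.mk bb := by
      intro j bb hbb hcontra
      rw [ConjClasses.mk_eq_mk_iff_isConj, isConj_coe] at hcontra
      obtain ⟨h, _, hh⟩ := hcontra
      apply RkE_ne_SjE m 0 j
      rw [RkE_zero]
      calc (1 : E2 ≃ₗᵢ[ℝ] E2) = h * ↑a * h⁻¹ := by simp [ha]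
        _ = SjE m j := by rw [hh, hbb]
    have h_v_b : ∀ j : ℤ, ∀ bb : G, (bb : E2 ≃ₗᵢ[ℝ] E2) = SjE m j →
        ConjClasses.mk v ≠ ConjClasses.mk bb := by
      intro j bb hbb hcontra
      rw [ConjClasses.mk_eq_mk_iff_isConj, isConj_coe] at hcontra
      obtain ⟨h, hhG, hh⟩ := hcontra
      rw [hbb] at hh
      have hcoe : (v : E2 ≃ₗᵢ[ℝ] E2) = RkE m (n:ℤ) := by rw [hv]
      rw [hcoe] at hh
      rcases conj_RkE (mem_G_classify hm hR hG hhG) (n:ℤ) with hc | hc <;>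
        rw [hc] at hh
      · exact RkE_ne_SjE m _ _ hh
      · exact RkE_ne_SjE m _ _ hh
    have h_b0_b1 : ConjClasses.mk b0 ≠ ConjClasses.mk b1 := by
      intro hcontra
      rw [ConjClasses.mk_eq_mk_iff_isConj, isConj_coe] at hcontra
      obtain ⟨h, hhG, hh⟩ := hcontra
      have hcoe0 : (b0 : E2 ≃ₗᵢ[ℝ] E2) = SjE m 0 := by rw [hb0]
      have hcoe1 : (b1 : E2 ≃ₗᵢ[ℝ] E2) = SjE m 1 := by rw [hb1]
      rw [hcoe0, hcoe1] at hh
      obtain ⟨i, hc | hc⟩ := conj_SjE (mem_G_classify hm hR hG hhG) 0 <;>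
        rw [hc] at hh <;>
        [have h2 := (SjE_eq_SjE hm0).1 hh; have h2 := (SjE_eq_SjE hm0).1 hh]
      · have h3 : (2:ℤ) ∣ (0 + 2*i - 1) := dvd_trans hdvd2 h2
        omega
      · have h3 : (2:ℤ) ∣ (2*i - 0 - 1) := dvd_trans hdvd2 h2
        omega
    have hSeq : S = {ConjClasses.mk a, ConjClasses.mk v,
        ConjClasses.mk b0, ConjClasses.mk b1} := by
      rw [hS]
      ext c
      simp only [Set.mem_setOf_eq, Set.mem_insert_iff, Set.mem_singleton_iff]
      constructor
      · rintro ⟨g, rfl, hgs⟩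
        have hinv : (g : E2 ≃ₗᵢ[ℝ] E2) * (g : E2 ≃ₗᵢ[ℝ] E2) = 1 := hgs.1
        rcases mem_G_classify hm hR hG g.2 with ⟨k, hk⟩ | ⟨j, hj⟩
        · have h2k : RkE m (k + k) = RkE m 0 := by
            rw [← RkE_mul_RkE, ← hk, hinv, RkE_zero]
          have hdvd : (m:ℤ) ∣ (k + k) := by
            have := (RkE_eq_RkE hm0).1 h2k
            simpa using this
          obtain ⟨q, hq⟩ := hdvd
          have hkq : k = (n:ℤ) * q := by
            have h2 : (2:ℤ) * k = 2 * ((n:ℤ) * q) := by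
              push_cast [hm2] at hq
              linarith
            exact mul_left_cancel₀ two_ne_zero h2
          rcases Int.even_or_odd q with ⟨r, hr⟩ | ⟨r, hr⟩
          · left
            have heq : (g : E2 ≃ₗᵢ[ℝ] E2) = 1 := by
              rw [hk, ← RkE_zero m]
              refine (RkE_eq_RkE hm0).2 ⟨r, ?_⟩
              rw [hkq, hr]
              push_cast [hm2]
              ring
            have hg1 : g = a := Subtype.ext (by simpa [ha] using heq)
            rw [hg1]
          · right; left
            have heq : (g : E2 ≃ₗᵢ[ℝ] E2) = RkE m (n:ℤ) := by
              rw [hk]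
              refine (RkE_eq_RkE hm0).2 ⟨r, ?_⟩
              rw [hkq, hr]
              push_cast [hm2]
              ring
            have hg1 : g = v := Subtype.ext (by rw [heq, hv])
            rw [hg1]
        · rcases Int.even_or_odd j with ⟨r, hr⟩ | ⟨r, hr⟩
          · right; right; left
            rw [ConjClasses.mk_eq_mk_iff_isConj, isConj_coe]
            refine ⟨RkE m (-r), RkE_mem hm hR hG _, ?_⟩
            rw [hj, conj_by_RkE]
            show SjE m _ = (b0 : E2 ≃ₗᵢ[ℝ] E2)
            rw [hb0]
            refine (SjE_eq_SjE hm0).2 ⟨0, ?_⟩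
            rw [hr]
            push_cast
            ring
          · right; right; right
            rw [ConjClasses.mk_eq_mk_iff_isConj, isConj_coe]
            refine ⟨RkE m (-r), RkE_mem hm hR hG _, ?_⟩
            rw [hj, conj_by_RkE]
            show SjE m _ = (b1 : E2 ≃ₗᵢ[ℝ] E2)
            rw [hb1]
            refine (SjE_eq_SjE hm0).2 ⟨0, ?_⟩
            rw [hr]
            push_cast
            ring
      · rintro (rfl | rfl | rfl | rfl)
        · exact ⟨a, rfl, by simpa [ha] using hone⟩
        · exact ⟨v, rfl, by simpa [hv] using hvspec⟩
        · exact ⟨b0, rfl, by simpa [hb0] using hSspec 0 (by omega)⟩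
        · exact ⟨b1, rfl, by simpa [hb1] using hSspec 1 (by omega)⟩
    rw [hSeq, Nat.card_coe_set_eq]
    rw [Set.ncard_insert_of_notMem (by
      simp only [Set.mem_insert_iff, Set.mem_singleton_iff]
      push_neg
      exact ⟨h_a_v, h_a_b 0 b0 (by rw [hb0]), h_a_b 1 b1 (by rw [hb1])⟩)]
    rw [Set.ncard_insert_of_notMem (by
      simp only [Set.mem_insert_iff, Set.mem_singleton_iff]
      push_neg
      exact ⟨h_v_b 0 b0 (by rw [hb0]), h_v_b 1 b1 (by rw [hb1])⟩)]
    rw [Set.ncard_pair h_b0_b1]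

end
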